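/- Let ω be a weight on the unit disc that is invariant, i.e. for each r ∈ (0,1) there exists C(r) ≥ 1 such that C(r)^{-1}·ω(a) ≤ ω(z) ≤ C(r)·ω(a) whenever z lies in the pseudohyperbolic disc Δ(a,r). Then there exists a function C : 𝔻 → [1,∞) of the form C(z) = C₀·((1+|z|)/(1-|z|))^{(log C₀)/2} such that ω(u) ≤ C(z)·ω(φ_u(z)) for all u, z ∈ 𝔻, and ∫_𝔻 log C(z) dA(z) < ∞. -/

import Mathlib

open MeasureTheory Set

section auxlemmas

open Complex

private lemma aux1 {a p : ℂ} (ha : ‖a‖ < 1) (hp : ‖p‖ < 1) :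
    1 - (starRingEnd ℂ) a * p ≠ 0 := by
  intro h
  have h2 : (starRingEnd ℂ) a * p = 1 := by linear_combination -h
  have := congrArg norm h2
  rw [norm_mul, RCLike.norm_conj, norm_one] at this
  nlinarith [norm_nonneg a, norm_nonneg p]

private lemma aux2 (a p : ℂ) : normSq (1 - (starRingEnd ℂ) a * p) - normSq (a - p)
    = (1 - normSq a) * (1 - normSq p) := by
  simp only [normSq_apply, Complex.sub_re, Complex.sub_im, Complex.mul_re, Complex.mul_im,
    Complex.one_re, Complex.one_im, Complex.conj_re, Complex.conj_im]
  ring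

private lemma auxSq {a : ℂ} (ha : ‖a‖ < 1) : normSq a < 1 := by
  have : normSq a = ‖a‖ ^ 2 := by rw [← Complex.sq_norm]
  nlinarith [norm_nonneg a]

private lemma aux3 {a p : ℂ} (ha : ‖a‖ < 1) (hp : ‖p‖ < 1) :
    ‖(a - p) / (1 - (starRingEnd ℂ) a * p)‖ < 1 := by
  have h0 := aux1 ha hp
  have h2 := aux2 a p
  have hna := auxSq ha
  have hnp := auxSq hp
  have hd : 0 < ‖1 - (starRingEnd ℂ) a * p‖ := norm_pos_iff.mpr h0
  rw [norm_div, div_lt_one hd]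
  have e1 : ‖a - p‖ ^ 2 = normSq (a - p) := by rw [← Complex.sq_norm]
  have e2 : ‖1 - (starRingEnd ℂ) a * p‖ ^ 2 = normSq (1 - (starRingEnd ℂ) a * p) := by
    rw [← Complex.sq_norm]
  nlinarith [norm_nonneg (a - p), norm_nonneg (1 - (starRingEnd ℂ) a * p)]

private lemma aux4 {a p q : ℂ} (ha : ‖a‖ < 1) (hp : ‖p‖ < 1) (hq : ‖q‖ < 1) :
    ‖((a - p) / (1 - (starRingEnd ℂ) a * p) - (a - q) / (1 - (starRingEnd ℂ) a * q)) /
      (1 - (starRingEnd ℂ) ((a - p) / (1 - (starRingEnd ℂ) a * p)) *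
        ((a - q) / (1 - (starRingEnd ℂ) a * q)))‖
    = ‖(p - q) / (1 - (starRingEnd ℂ) p * q)‖ := by
  set c := starRingEnd ℂ with hc
  have hA : (1 : ℂ) - c a * p ≠ 0 := aux1 ha hp
  have hB : (1 : ℂ) - c a * q ≠ 0 := aux1 ha hq
  have hD : (1 : ℂ) - c p * q ≠ 0 := aux1 hp hq
  have hAa : (1 : ℂ) - c a * a ≠ 0 := aux1 ha ha
  have hconjA : c ((1 : ℂ) - c a * p) = 1 - a * c p := by
    simp only [map_sub, map_mul, map_one, Complex.conj_conj, hc]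
  have hcA' : (1 : ℂ) - a * c p ≠ 0 := by
    rw [← hconjA]; exact fun h => hA (by simpa using congrArg c h)
  have hnum : (a - p) / (1 - c a * p) - (a - q) / (1 - c a * q)
      = (c a * a - 1) * (p - q) / ((1 - c a * p) * (1 - c a * q)) := by
    rw [div_sub_div _ _ hA hB]
    congr 1
    ring
  have hden : 1 - c ((a - p) / (1 - c a * p)) * ((a - q) / (1 - c a * q))
      = (1 - c a * a) * (1 - c p * q) / ((1 - a * c p) * (1 - c a * q)) := by
    rw [map_div₀, hconjA, map_sub]
    rw [div_mul_div_comm, one_sub_div (mul_ne_zero hcA' hB)]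
    congr 1
    ring
  rw [hnum, hden]
  have key : (c a * a - 1) * (p - q) / ((1 - c a * p) * (1 - c a * q)) /
      ((1 - c a * a) * (1 - c p * q) / ((1 - a * c p) * (1 - c a * q)))
      = -((p - q) * (1 - a * c p)) / ((1 - c a * p) * (1 - c p * q)) := by
    field_simp
    ring
  rw [key, norm_div, norm_neg, norm_mul, norm_mul, norm_div]
  have h3 : ‖(1 : ℂ) - a * c p‖ = ‖(1 : ℂ) - c a * p‖ := by
    rw [← hconjA, RCLike.norm_conj]
  have hnA : ‖(1 : ℂ) - c a * p‖ ≠ 0 := norm_ne_zero_iff.mpr hA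
  rw [h3, mul_comm ‖(1 : ℂ) - c a * p‖ ‖(1 : ℂ) - c p * q‖, mul_div_mul_right _ _ hnA]

end auxlemmas

section auxlemmas2

private lemma aux5 {s t : ℝ} (hs : 0 ≤ s) (hst : s ≤ t) (ht : t < 1) {ζ : ℂ} (hζ : ‖ζ‖ = 1) :
    ‖((t : ℂ) * ζ - (s : ℂ) * ζ) / (1 - (starRingEnd ℂ) ((t : ℂ) * ζ) * ((s : ℂ) * ζ))‖
      = (t - s) / (1 - t * s) := by
  have hζζ : (starRingEnd ℂ) ζ * ζ = 1 := by
    rw [mul_comm, Complex.mul_conj]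
    norm_cast
    rw [← Complex.sq_norm, hζ]; norm_num
  have h1 : (starRingEnd ℂ) ((t : ℂ) * ζ) * ((s : ℂ) * ζ) = ((t * s : ℝ) : ℂ) := by
    rw [map_mul, Complex.conj_ofReal]
    push_cast
    linear_combination (t : ℂ) * (s : ℂ) * hζζ
  rw [h1]
  have h2 : (t : ℂ) * ζ - (s : ℂ) * ζ = ((t - s : ℝ) : ℂ) * ζ := by push_cast; ring
  have h3 : (1 : ℂ) - ((t * s : ℝ) : ℂ) = ((1 - t * s : ℝ) : ℂ) := by push_cast; ring
  rw [h2, h3, norm_div, norm_mul, hζ, Complex.norm_real, Complex.norm_real, mul_one,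
    Real.norm_eq_abs, Real.norm_eq_abs, abs_of_nonneg (by linarith),
    abs_of_nonneg (by nlinarith)]

private lemma aux6 {a q : ℝ} (ha : 1 ≤ a) (hq : 1 < q) :
    ((a * q - 1) / (a * q + 1) - (a - 1) / (a + 1)) /
      (1 - (a * q - 1) / (a * q + 1) * ((a - 1) / (a + 1))) = (q - 1) / (q + 1) := by
  have h1 : (0:ℝ) < a + 1 := by linarith
  have h2 : (0:ℝ) < a * q + 1 := by nlinarith
  have hnum : (a * q - 1) / (a * q + 1) - (a - 1) / (a + 1)
      = 2 * (a * q - a) / ((a + 1) * (a * q + 1)) := by field_simp; ring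
  have hden : 1 - (a * q - 1) / (a * q + 1) * ((a - 1) / (a + 1))
      = 2 * (a * q + a) / ((a + 1) * (a * q + 1)) := by field_simp; ring
  rw [hnum, hden, div_div_div_cancel_right₀]
  · rw [div_eq_div_iff (by nlinarith) (by linarith)]
    ring
  · positivity

private lemma int_log : IntegrableOn (fun z : ℂ => Real.log (1 - ‖z‖)) (Metric.ball 0 1) := by
  have hmeas : Measurable fun z : ℂ => Real.log (1 - ‖z‖) :=
    Real.measurable_log.comp (measurable_const.sub measurable_norm)
  refine ⟨(hmeas.aestronglyMeasurable).restrict, ?_⟩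
  rw [hasFiniteIntegral_iff_norm]
  have hg : AEMeasurable (fun z : ℂ => -Real.log (1 - ‖z‖))
      (volume.restrict (Metric.ball (0:ℂ) 1)) := hmeas.neg.aemeasurable
  have hnn : 0 ≤ᵐ[volume.restrict (Metric.ball (0:ℂ) 1)]
      fun z : ℂ => -Real.log (1 - ‖z‖) := by
    filter_upwards [ae_restrict_mem measurableSet_ball] with z hz
    rw [Metric.mem_ball, dist_zero_right] at hz
    simp only [Pi.zero_apply, neg_nonneg]
    exact Real.log_nonpos (by linarith) (by linarith [norm_nonneg z])
  have heq : (fun z : ℂ => ENNReal.ofReal ‖Real.log (1 - ‖z‖)‖)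
      =ᵐ[volume.restrict (Metric.ball (0:ℂ) 1)]
      fun z : ℂ => ENNReal.ofReal (-Real.log (1 - ‖z‖)) := by
    filter_upwards [ae_restrict_mem measurableSet_ball] with z hz
    rw [Metric.mem_ball, dist_zero_right] at hz
    rw [Real.norm_eq_abs, abs_of_nonpos (Real.log_nonpos (by linarith) (by linarith [norm_nonneg z]))]
  rw [lintegral_congr_ae heq,
    lintegral_eq_lintegral_meas_lt _ hnn hg]
  have hbound : ∀ s ∈ Ioi (0:ℝ),
      (volume.restrict (Metric.ball (0:ℂ) 1)) {z : ℂ | s < -Real.log (1 - ‖z‖)}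
        ≤ ENNReal.ofReal (2 * Real.pi * Real.exp (-s)) := by
    intro s hs
    rw [mem_Ioi] at hs
    have hes : Real.exp (-s) < 1 := Real.exp_lt_one_iff.mpr (by linarith)
    set r : ℝ := 1 - Real.exp (-s) with hr
    have hr0 : 0 < r := by simp only [hr]; linarith
    have hr1 : r < 1 := by simp only [hr]; nlinarith [Real.exp_pos (-s)]
    have hSmeas : MeasurableSet {z : ℂ | s < -Real.log (1 - ‖z‖)} :=
      measurableSet_lt measurable_const hmeas.neg
    rw [Measure.restrict_apply hSmeas]
    have hsub : {z : ℂ | s < -Real.log (1 - ‖z‖)} ∩ Metric.ball 0 1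
        ⊆ Metric.ball (0:ℂ) 1 \ Metric.closedBall 0 r := by
      rintro z ⟨hz1, hz2⟩
      rw [Metric.mem_ball, dist_zero_right] at hz2
      refine ⟨by rwa [Metric.mem_ball, dist_zero_right], ?_⟩
      rw [Metric.mem_closedBall, dist_zero_right]
      intro hle
      rw [mem_setOf_eq] at hz1
      have h1 : Real.log (1 - ‖z‖) < -s := by linarith
      have h2 : 1 - ‖z‖ < Real.exp (-s) := (Real.log_lt_iff_lt_exp (by linarith)).mp h1
      simp only [hr] at hle
      linarith
    refine le_trans (measure_mono hsub) ?_
    rw [measure_diff (Metric.closedBall_subset_ball hr1)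
      measurableSet_closedBall.nullMeasurableSet
      (ne_of_lt (lt_of_le_of_lt (measure_mono (Metric.closedBall_subset_ball hr1))
        (by rw [Complex.volume_ball]
            exact lt_top_iff_ne_top.mpr (ENNReal.mul_ne_top (by simp) ENNReal.coe_ne_top)))),
      Complex.volume_ball, Complex.volume_closedBall]
    have hpi : ((NNReal.pi : ENNReal)) = ENNReal.ofReal Real.pi := by
      rw [ENNReal.ofReal, Real.toNNReal_of_nonneg Real.pi_pos.le]
      exact congrArg _ (NNReal.coe_injective (by simp [NNReal.coe_real_pi]))
    rw [hpi, ← ENNReal.ofReal_pow (by norm_num : (0:ℝ) ≤ 1), ← ENNReal.ofReal_pow hr0.le,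
      ← ENNReal.ofReal_mul (by positivity), ← ENNReal.ofReal_mul (by positivity),
      tsub_le_iff_right, ← ENNReal.ofReal_add (by positivity) (by positivity)]
    apply ENNReal.ofReal_le_ofReal
    have : r ^ 2 = 1 - 2 * Real.exp (-s) + Real.exp (-s) ^ 2 := by rw [hr]; ring
    nlinarith [Real.pi_pos, Real.exp_pos (-s), sq_nonneg (Real.exp (-s))]
  calc ∫⁻ s in Ioi (0:ℝ), (volume.restrict (Metric.ball (0:ℂ) 1)) {z : ℂ | s < -Real.log (1 - ‖z‖)}
      ≤ ∫⁻ s in Ioi (0:ℝ), ENNReal.ofReal (2 * Real.pi * Real.exp (-s)) := by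
        refine lintegral_mono_ae ?_
        rw [ae_restrict_iff' measurableSet_Ioi]
        exact Filter.Eventually.of_forall hbound
    _ < ⊤ := by
        have hint : IntegrableOn (fun s : ℝ => 2 * Real.pi * Real.exp (-s)) (Ioi 0) := by
          have := (exp_neg_integrableOn_Ioi 0 (b := 1) one_pos)
          simpa [IntegrableOn] using this.const_mul (2 * Real.pi)
        exact hint.lintegral_lt_top

end auxlemmas2

theorem stmt_14 (ω : ℂ → ℝ) (hωpos : ∀ z ∈ Metric.ball (0 : ℂ) 1, 0 < ω z)
    (hinv : ∀ r : ℝ, 0 < r → r < 1 → ∃ C : ℝ, 1 ≤ C ∧ ∀ a z : ℂ,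
      a ∈ Metric.ball (0 : ℂ) 1 → z ∈ Metric.ball (0 : ℂ) 1 →
      ‖(a - z) / (1 - (starRingEnd ℂ) a * z)‖ < r →
      C⁻¹ * ω a ≤ ω z ∧ ω z ≤ C * ω a) :
    ∃ C₀ : ℝ, 1 ≤ C₀ ∧
      (∀ u z : ℂ, u ∈ Metric.ball (0 : ℂ) 1 → z ∈ Metric.ball (0 : ℂ) 1 →
        ω u ≤ (C₀ * ((1 + ‖z‖) / (1 - ‖z‖)) ^ (Real.log C₀ / 2)) *
          ω ((u - z) / (1 - (starRingEnd ℂ) u * z))) ∧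
      IntegrableOn
        (fun z : ℂ => Real.log (C₀ * ((1 + ‖z‖) / (1 - ‖z‖)) ^ (Real.log C₀ / 2)))
        (Metric.ball (0 : ℂ) 1) := by
  set E := Real.exp 2 with hE
  have hE1 : 1 < E := by
    rw [hE]
    calc (1:ℝ) = Real.exp 0 := Real.exp_zero.symm
    _ < Real.exp 2 := Real.exp_lt_exp.mpr (by norm_num)
  set r₀ : ℝ := (E - 1) / (E + 1) with hr₀
  have hr₀pos : 0 < r₀ := by rw [hr₀]; exact div_pos (by linarith) (by linarith)
  have hr₀lt : r₀ < 1 := by rw [hr₀, div_lt_one (by linarith)]; linarith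
  obtain ⟨C, hC1, hC⟩ := hinv r₀ hr₀pos hr₀lt
  have hCpos : 0 < C := lt_of_lt_of_le one_pos hC1
  refine ⟨C, hC1, ?_, ?_⟩
  · -- pointwise inequality
    intro u z hu hz
    rw [Metric.mem_ball, dist_zero_right] at hu hz
    by_cases hz0 : z = 0
    · subst hz0
      simp only [norm_zero, sub_zero, mul_zero, add_zero, div_one, Real.one_rpow, mul_one]
      have : 0 < ω u := hωpos u (by rwa [Metric.mem_ball, dist_zero_right])
      nlinarith
    · set t : ℝ := ‖z‖ with htdef
      have ht0 : 0 < t := norm_pos_iff.mpr hz0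
      have ht1 : t < 1 := hz
      set R : ℝ := (1 + t) / (1 - t) with hRdef
      have hRpos : 0 < R := by rw [hRdef]; exact div_pos (by linarith) (by linarith)
      have hR1 : 1 < R := by rw [hRdef, lt_div_iff₀ (by linarith)]; linarith
      set L : ℝ := Real.log R with hLdef
      have hL : 0 < L := Real.log_pos hR1
      set N : ℕ := ⌊L / 2⌋₊ + 1 with hNdef
      have hNR : (0:ℝ) < N := by
        rw [hNdef]; push_cast; positivity
      have hNgt : L / 2 < N := by
        rw [hNdef]; push_cast; exact Nat.lt_floor_add_one _
      have hNle : (N : ℝ) ≤ L / 2 + 1 := by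
        rw [hNdef]; push_cast
        have := Nat.floor_le (show (0:ℝ) ≤ L / 2 by positivity)
        linarith
      set q : ℝ := R ^ ((N : ℝ))⁻¹ with hqdef
      have hq1 : 1 < q := by
        rw [hqdef]
        exact Real.one_lt_rpow_iff_of_pos hRpos |>.mpr (Or.inl ⟨hR1, by positivity⟩)
      have hqE : q < E := by
        rw [hqdef, hE, Real.rpow_def_of_pos hRpos]
        apply Real.exp_lt_exp.mpr
        rw [← hLdef, mul_inv_lt_iff₀ hNR]
        linarith
      -- the scaled radii
      set ρ : ℕ → ℝ := fun k => R ^ ((k : ℝ) / (N : ℝ)) with hρdef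
      have hρ1 : ∀ k, 1 ≤ ρ k := fun k =>
        Real.one_le_rpow hR1.le (by positivity)
      have hρs : ∀ k, ρ (k + 1) = ρ k * q := by
        intro k
        show R ^ (((k + 1 : ℕ) : ℝ) / (N : ℝ)) = R ^ ((k : ℝ) / (N : ℝ)) * R ^ ((N : ℝ))⁻¹
        rw [← Real.rpow_add hRpos]
        congr 1
        push_cast
        field_simp
      set tk : ℕ → ℝ := fun k => (ρ k - 1) / (ρ k + 1) with htkdef
      have htknn : ∀ k, 0 ≤ tk k := fun k => by
        have := hρ1 k
        show 0 ≤ (ρ k - 1) / (ρ k + 1)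
        apply div_nonneg <;> linarith
      have htklt : ∀ k, tk k < 1 := fun k => by
        have := hρ1 k
        show (ρ k - 1) / (ρ k + 1) < 1
        rw [div_lt_one (by linarith)]
        linarith
      have hρ0 : ρ 0 = 1 := by
        show R ^ (((0 : ℕ) : ℝ) / (N : ℝ)) = 1
        norm_num
      have htk0 : tk 0 = 0 := by
        show (ρ 0 - 1) / (ρ 0 + 1) = 0
        rw [hρ0]
        norm_num
      have hρN : ρ N = R := by
        show R ^ ((N : ℝ) / (N : ℝ)) = R
        rw [div_self (ne_of_gt hNR), Real.rpow_one]
      have htkN : tk N = t := by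
        show (ρ N - 1) / (ρ N + 1) = t
        rw [hρN, hRdef]
        rw [div_eq_iff (by
          have h2 : (0:ℝ) < (1 + t) / (1 - t) := div_pos (by linarith) (by linarith)
          linarith)]
        field_simp [show (1:ℝ) - t ≠ 0 from by linarith]
        ring
      have htkmono : ∀ k, tk k ≤ tk (k + 1) := by
        intro k
        show (ρ k - 1) / (ρ k + 1) ≤ (ρ (k + 1) - 1) / (ρ (k + 1) + 1)
        rw [hρs k]
        have h1 := hρ1 k
        rw [div_le_div_iff₀ (by linarith) (by nlinarith)]
        nlinarith
      have hstep : ∀ k, (tk (k + 1) - tk k) / (1 - tk (k + 1) * tk k) = (q - 1) / (q + 1) := by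
        intro k
        show ((ρ (k+1) - 1) / (ρ (k+1) + 1) - (ρ k - 1) / (ρ k + 1)) /
          (1 - (ρ (k+1) - 1) / (ρ (k+1) + 1) * ((ρ k - 1) / (ρ k + 1))) = (q - 1) / (q + 1)
        rw [hρs k]
        exact aux6 (hρ1 k) hq1
      have hstep_lt : (q - 1) / (q + 1) < r₀ := by
        rw [hr₀, div_lt_div_iff₀ (by linarith) (by linarith)]
        nlinarith
      -- the points
      set ζ : ℂ := ((t : ℝ) : ℂ)⁻¹ * z with hζdef
      have hζ : ‖ζ‖ = 1 := by
        rw [hζdef, norm_mul, norm_inv, Complex.norm_real, Real.norm_eq_abs,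
          abs_of_pos ht0, ← htdef]
        field_simp
      set p : ℕ → ℂ := fun k => ((tk k : ℝ) : ℂ) * ζ with hpdef
      have hpnorm : ∀ k, ‖p k‖ = tk k := fun k => by
        show ‖((tk k : ℝ) : ℂ) * ζ‖ = tk k
        rw [norm_mul, hζ, Complex.norm_real, Real.norm_eq_abs, abs_of_nonneg (htknn k), mul_one]
      have hpball : ∀ k, ‖p k‖ < 1 := fun k => by rw [hpnorm k]; exact htklt k
      have hpN : p N = z := by
        show ((tk N : ℝ) : ℂ) * ζ = z
        rw [htkN, hζdef, ← mul_assoc,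
          mul_inv_cancel₀ (Complex.ofReal_ne_zero.mpr (ne_of_gt ht0)), one_mul]
      have hp0 : p 0 = 0 := by
        show ((tk 0 : ℝ) : ℂ) * ζ = 0
        rw [htk0]
        simp
      -- φ values in ball
      have hφball : ∀ k, (u - p k) / (1 - (starRingEnd ℂ) u * p k) ∈ Metric.ball (0:ℂ) 1 := by
        intro k
        rw [Metric.mem_ball, dist_zero_right]
        exact aux3 hu (hpball k)
      -- chain step
      have hchain : ∀ k, ω ((u - p k) / (1 - (starRingEnd ℂ) u * p k))
          ≤ C * ω ((u - p (k + 1)) / (1 - (starRingEnd ℂ) u * p (k + 1))) := by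
        intro k
        refine (hC ((u - p (k + 1)) / (1 - (starRingEnd ℂ) u * p (k + 1)))
          ((u - p k) / (1 - (starRingEnd ℂ) u * p k)) (hφball (k + 1)) (hφball k) ?_).2
        rw [aux4 hu (hpball (k + 1)) (hpball k)]
        have : ‖(p (k + 1) - p k) / (1 - (starRingEnd ℂ) (p (k + 1)) * p k)‖
            = (tk (k + 1) - tk k) / (1 - tk (k + 1) * tk k) :=
          aux5 (htknn k) (htkmono k) (htklt (k + 1)) hζ
        rw [this, hstep k]
        exact hstep_lt
      -- iterate
      have hiter : ∀ k, ω u ≤ C ^ k * ω ((u - p k) / (1 - (starRingEnd ℂ) u * p k)) := by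
        intro k
        induction k with
        | zero =>
          simp [hp0]
        | succ k ih =>
          calc ω u ≤ C ^ k * ω ((u - p k) / (1 - (starRingEnd ℂ) u * p k)) := ih
          _ ≤ C ^ k * (C * ω ((u - p (k + 1)) / (1 - (starRingEnd ℂ) u * p (k + 1)))) :=
              mul_le_mul_of_nonneg_left (hchain k) (by positivity)
          _ = C ^ (k + 1) * ω ((u - p (k + 1)) / (1 - (starRingEnd ℂ) u * p (k + 1))) := by
              ring
      have hfinal := hiter N
      rw [hpN] at hfinal
      -- bound C ^ N
      have hpow : (C : ℝ) ^ N ≤ C * R ^ (Real.log C / 2) := by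
        have e1 : (C : ℝ) ^ N = C ^ ((N : ℝ) : ℝ) := by
          rw [Real.rpow_natCast]
        rw [e1]
        calc C ^ ((N : ℝ) : ℝ) ≤ C ^ (L / 2 + 1) :=
            Real.rpow_le_rpow_of_exponent_le hC1 hNle
        _ = C * C ^ (L / 2) := by
            rw [Real.rpow_add hCpos, Real.rpow_one]; ring
        _ = C * R ^ (Real.log C / 2) := by
            congr 1
            rw [Real.rpow_def_of_pos hCpos, Real.rpow_def_of_pos hRpos, ← hLdef]
            congr 1
            ring
      have hωw : 0 < ω ((u - z) / (1 - (starRingEnd ℂ) u * z)) := by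
        apply hωpos
        rw [Metric.mem_ball, dist_zero_right]
        exact aux3 hu hz
      linarith [mul_le_mul_of_nonneg_right hpow hωw.le]
  · -- integrability
    set e : ℝ := Real.log C / 2 with hedef
    have hmeas1 : Measurable fun z : ℂ => Real.log (1 + ‖z‖) :=
      Real.measurable_log.comp (measurable_const.add measurable_norm)
    have hint1 : IntegrableOn (fun z : ℂ => Real.log (1 + ‖z‖)) (Metric.ball 0 1) := by
      apply Measure.integrableOn_of_bounded (M := Real.log 2)
      · rw [Complex.volume_ball]
        exact ENNReal.mul_ne_top (by simp) ENNReal.coe_ne_top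
      · exact hmeas1.aestronglyMeasurable
      · filter_upwards [ae_restrict_mem measurableSet_ball] with z hz
        rw [Metric.mem_ball, dist_zero_right] at hz
        rw [Real.norm_eq_abs, abs_of_nonneg (Real.log_nonneg (by linarith [norm_nonneg z]))]
        exact Real.log_le_log (by linarith [norm_nonneg z]) (by linarith)
    have hG : IntegrableOn (fun z : ℂ =>
        Real.log C + e * Real.log (1 + ‖z‖) - e * Real.log (1 - ‖z‖)) (Metric.ball 0 1) := by
      apply Integrable.sub
      · refine Integrable.add ?_ (hint1.const_mul e)
        refine (integrableOn_const_iff enorm_ne_top).mpr (Or.inr ?_)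
        rw [Complex.volume_ball]
        exact ENNReal.mul_lt_top (by simp [ENNReal.ofReal_lt_top]) ENNReal.coe_lt_top
      · exact int_log.const_mul e
    apply hG.congr_fun ?_ measurableSet_ball
    intro z hz
    rw [Metric.mem_ball, dist_zero_right] at hz
    have h1 : (0:ℝ) < 1 + ‖z‖ := by linarith [norm_nonneg z]
    have h2 : (0:ℝ) < 1 - ‖z‖ := by linarith
    have hX : (0:ℝ) < (1 + ‖z‖) / (1 - ‖z‖) := by positivity
    show Real.log C + e * Real.log (1 + ‖z‖) - e * Real.log (1 - ‖z‖)
        = Real.log (C * ((1 + ‖z‖) / (1 - ‖z‖)) ^ e)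
    rw [Real.log_mul (ne_of_gt hCpos) (ne_of_gt (Real.rpow_pos_of_pos hX _)),
      Real.log_rpow hX, Real.log_div (ne_of_gt h1) (ne_of_gt h2)]
    ring
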